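/- Let n ≥ 3 and let S be a nonempty proper subset of [n-1]. Then the maximum of d_ℓ over pairs of distinct permutations in D(S;n) equals the maximum of d_ℓ over pairs of distinct permutations in D(S̄;n), where S̄ = [n-1] \ S. -/

import Mathlib

/-- `σ` is a permutation of `[n] = {1,…,n}`, written in one-line notation:
`σ j` is the `j`-th entry, for `1 ≤ j ≤ n`. -/
def IsPermOn (n : ℕ) (σ : ℕ → ℕ) : Prop :=
  Set.BijOn σ (Set.Icc 1 n) (Set.Icc 1 n)

/-- The descent set `D(σ) = {i ∈ [n-1] | σ_i > σ_{i+1}}`. -/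
def DescentSet (n : ℕ) (σ : ℕ → ℕ) : Finset ℕ :=
  (Finset.Icc 1 (n - 1)).filter fun i => σ (i + 1) < σ i

/-- `D(S;n)`, the set of permutations of `[n]` with descent set `S`. -/
def DSn (n : ℕ) (S : Finset ℕ) : Set (ℕ → ℕ) :=
  {σ | IsPermOn n σ ∧ DescentSet n σ = S}

/-- The Hamming distance `d_H(σ,ρ) = |{i ∈ [n] : σ_i ≠ ρ_i}|`. -/
def dHamming (n : ℕ) (σ ρ : ℕ → ℕ) : ℕ :=
  ((Finset.Icc 1 n).filter fun i => σ i ≠ ρ i).card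

/-- The `ℓ∞` distance `d_ℓ(σ,ρ) = max_{1 ≤ i ≤ n} |σ_i − ρ_i|`. -/
def dLinf (n : ℕ) (σ ρ : ℕ → ℕ) : ℕ :=
  (Finset.Icc 1 n).sup fun i => ((σ i : ℤ) - (ρ i : ℤ)).natAbs

/-- `σ` and `ρ` are distinct as permutations of `[n]`
(they differ at some index of `[n]`). -/
def DistinctOn (n : ℕ) (σ ρ : ℕ → ℕ) : Prop :=
  ∃ i ∈ Set.Icc 1 n, σ i ≠ ρ i

namespace Stmt16Aux

/-- The complementation map `σ ↦ n+1-σ`. -/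
def comp (n : ℕ) (σ : ℕ → ℕ) : ℕ → ℕ := fun i => n + 1 - σ i

lemma mem_bounds {n : ℕ} {σ : ℕ → ℕ} (h : IsPermOn n σ) {i : ℕ}
    (hi : i ∈ Set.Icc 1 n) : 1 ≤ σ i ∧ σ i ≤ n :=
  Set.mem_Icc.mp (h.mapsTo hi)

lemma comp_perm {n : ℕ} {σ : ℕ → ℕ} (h : IsPermOn n σ) :
    IsPermOn n (comp n σ) := by
  refine ⟨fun i hi => ?_, fun i hi j hj hij => ?_, fun y hy => ?_⟩
  · obtain ⟨h1, h2⟩ := mem_bounds h hi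
    simp only [comp, Set.mem_Icc]; omega
  · obtain ⟨a1, a2⟩ := mem_bounds h hi
    obtain ⟨b1, b2⟩ := mem_bounds h hj
    have : σ i = σ j := by simp only [comp] at hij; omega
    exact h.injOn hi hj this
  · obtain ⟨hy1, hy2⟩ := Set.mem_Icc.mp hy
    have hy' : n + 1 - y ∈ Set.Icc 1 n := by simp only [Set.mem_Icc]; omega
    obtain ⟨i, hi, hσi⟩ := h.surjOn hy'
    exact ⟨i, hi, by simp only [comp, hσi]; omega⟩

lemma comp_descent {n : ℕ} {σ : ℕ → ℕ} (h : IsPermOn n σ) :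
    DescentSet n (comp n σ) = Finset.Icc 1 (n - 1) \ DescentSet n σ := by
  ext i
  simp only [DescentSet, Finset.mem_sdiff, Finset.mem_filter, Finset.mem_Icc]
  simp only [DescentSet, Finset.mem_sdiff, Finset.mem_filter, Finset.mem_Icc, comp]
  constructor
  · rintro ⟨⟨hi1, hi2⟩, hlt⟩
    have hmem : i ∈ Set.Icc 1 n := Set.mem_Icc.mpr ⟨hi1, by omega⟩
    have hmem' : (i + 1) ∈ Set.Icc 1 n := Set.mem_Icc.mpr ⟨by omega, by omega⟩
    obtain ⟨a1, a2⟩ := mem_bounds h hmem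
    obtain ⟨b1, b2⟩ := mem_bounds h hmem'
    exact ⟨⟨hi1, hi2⟩, by omega⟩
  · rintro ⟨⟨hi1, hi2⟩, hnot⟩
    have hmem : i ∈ Set.Icc 1 n := Set.mem_Icc.mpr ⟨hi1, by omega⟩
    have hmem' : (i + 1) ∈ Set.Icc 1 n := Set.mem_Icc.mpr ⟨by omega, by omega⟩
    obtain ⟨a1, a2⟩ := mem_bounds h hmem
    obtain ⟨b1, b2⟩ := mem_bounds h hmem'
    have hne : σ i ≠ σ (i + 1) := fun he => by
      have := h.injOn hmem hmem' he; omega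
    exact ⟨⟨hi1, hi2⟩, by omega⟩

lemma comp_dLinf {n : ℕ} {σ ρ : ℕ → ℕ} (hσ : IsPermOn n σ) (hρ : IsPermOn n ρ) :
    dLinf n (comp n σ) (comp n ρ) = dLinf n σ ρ := by
  unfold dLinf
  apply Finset.sup_congr rfl
  intro i hi
  rw [Finset.mem_Icc] at hi
  have hi' : i ∈ Set.Icc 1 n := Set.mem_Icc.mpr hi
  obtain ⟨a1, a2⟩ := mem_bounds hσ hi'
  obtain ⟨b1, b2⟩ := mem_bounds hρ hi'
  simp only [comp]
  omega

lemma map_DSn {n : ℕ} {S : Finset ℕ} {σ : ℕ → ℕ} (h : σ ∈ DSn n S) :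
    comp n σ ∈ DSn n (Finset.Icc 1 (n - 1) \ S) :=
  ⟨comp_perm h.1, by rw [comp_descent h.1, h.2]⟩

lemma subset_aux (n : ℕ) (S : Finset ℕ) :
    {d : ℕ | ∃ σ ∈ DSn n S, ∃ ρ ∈ DSn n S,
      DistinctOn n σ ρ ∧ d = dLinf n σ ρ} ⊆
    {d : ℕ | ∃ σ ∈ DSn n (Finset.Icc 1 (n - 1) \ S),
      ∃ ρ ∈ DSn n (Finset.Icc 1 (n - 1) \ S),
      DistinctOn n σ ρ ∧ d = dLinf n σ ρ} := by
  rintro d ⟨σ, hσ, ρ, hρ, ⟨i, hi, hne⟩, rfl⟩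
  refine ⟨comp n σ, map_DSn hσ, comp n ρ, map_DSn hρ, ⟨i, hi, ?_⟩,
    (comp_dLinf hσ.1 hρ.1).symm⟩
  obtain ⟨a1, a2⟩ := mem_bounds hσ.1 hi
  obtain ⟨b1, b2⟩ := mem_bounds hρ.1 hi
  simp only [comp]
  omega

end Stmt16Aux

/-- For nonempty proper `S ⊆ [n-1]`, the maximum `ℓ∞` distance over `D(S;n)`
equals the maximum `ℓ∞` distance over `D(S̄;n)`, where `S̄ = [n-1] \ S`. -/
theorem stmt16 (n : ℕ) (hn : 3 ≤ n) (S : Finset ℕ)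
    (hsub : S ⊆ Finset.Icc 1 (n - 1)) (hne : S.Nonempty)
    (hproper : S ≠ Finset.Icc 1 (n - 1)) :
    ∀ m : ℕ,
      IsGreatest {d : ℕ | ∃ σ ∈ DSn n S, ∃ ρ ∈ DSn n S,
        DistinctOn n σ ρ ∧ d = dLinf n σ ρ} m ↔
      IsGreatest {d : ℕ | ∃ σ ∈ DSn n (Finset.Icc 1 (n - 1) \ S),
        ∃ ρ ∈ DSn n (Finset.Icc 1 (n - 1) \ S),
        DistinctOn n σ ρ ∧ d = dLinf n σ ρ} m := by
  intro m
  have hcc : Finset.Icc 1 (n - 1) \ (Finset.Icc 1 (n - 1) \ S) = S := by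
    rw [sdiff_sdiff_right_self]
    exact inf_eq_right.mpr hsub
  have hset : {d : ℕ | ∃ σ ∈ DSn n S, ∃ ρ ∈ DSn n S,
        DistinctOn n σ ρ ∧ d = dLinf n σ ρ} =
      {d : ℕ | ∃ σ ∈ DSn n (Finset.Icc 1 (n - 1) \ S),
        ∃ ρ ∈ DSn n (Finset.Icc 1 (n - 1) \ S),
        DistinctOn n σ ρ ∧ d = dLinf n σ ρ} := by
    apply Set.Subset.antisymm (Stmt16Aux.subset_aux n S)
    have h2 := Stmt16Aux.subset_aux n (Finset.Icc 1 (n - 1) \ S)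
    rwa [hcc] at h2
  rw [hset]
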